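/- Let K, F, Z, S be positive integers with Z < F. Define f(0) = ⌈K·(F−Z)/F⌉ and, recursively, f(i) = ⌈f(i−1)·(F−Z−i)/(F−i)⌉ for 1 ≤ i ≤ F−Z−1. If a (K,F,Z,S)-PDA exists, then S ≥ Σ_{i=0}^{F−Z−1} f(i). -/

import Mathlib

/-- A `(K, F, Z, S)` placement delivery array: an `F × K` array over
`{0, …, S-1} ∪ {*}` (with `none` playing the role of `*`) such that
(1) each integer occurs at most once in each row and in each column,
(2) whenever two distinct cells `(a, b)` and `(c, d)` contain the same
integer, the opposite corners `(a, d)` and `(c, b)` contain `*`, and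
(3) the symbol `*` occurs exactly `Z` times in each column. -/
def IsPDA (K F Z S : ℕ) (P : Fin F → Fin K → Option (Fin S)) : Prop :=
  (∀ (i : Fin F) (j j' : Fin K) (s : Fin S), P i j = some s → P i j' = some s → j = j') ∧
  (∀ (i i' : Fin F) (j : Fin K) (s : Fin S), P i j = some s → P i' j = some s → i = i') ∧
  (∀ (a c : Fin F) (b d : Fin K) (s : Fin S),
      (a, b) ≠ (c, d) → P a b = some s → P c d = some s →
      P a d = none ∧ P c b = none) ∧
  (∀ j : Fin K, (Finset.univ.filter (fun i => P i j = none)).card = Z)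

/-- There exists a `(K, F, Z, S)` placement delivery array. -/
def PDAExists (K F Z S : ℕ) : Prop :=
  ∃ P : Fin F → Fin K → Option (Fin S), IsPDA K F Z S P


def gPDA : ℕ → ℤ → ℕ → ℤ
  | 0, _, _ => 0
  | n+1, K, F => ⌈((K : ℚ) * ((n : ℚ) + 1)) / (F : ℚ)⌉ +
      gPDA n ⌈((K : ℚ) * ((n : ℚ) + 1)) / (F : ℚ)⌉ (F - 1)

lemma gPDA_mono (n : ℕ) : ∀ (F : ℕ) (a b : ℤ), a ≤ b → gPDA n a F ≤ gPDA n b F := by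
  induction n with
  | zero => intros; simp [gPDA]
  | succ n ih =>
    intro F a b hab
    have hc : ⌈((a : ℚ) * ((n : ℚ) + 1)) / (F : ℚ)⌉ ≤ ⌈((b : ℚ) * ((n : ℚ) + 1)) / (F : ℚ)⌉ := by
      apply Int.ceil_le_ceil
      rw [div_eq_mul_inv, div_eq_mul_inv]
      apply mul_le_mul_of_nonneg_right _ (by positivity)
      apply mul_le_mul_of_nonneg_right _ (by positivity)
      exact_mod_cast hab
    simp only [gPDA]
    exact add_le_add hc (ih _ _ _ hc)

def usedSet {I J α : Type} [Fintype I] [Fintype J] [DecidableEq α]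
    (A : I → J → Option α) : Finset (Option α) :=
  ((Finset.univ : Finset (I × J)).image fun p => A p.1 p.2).erase none

lemma mem_usedSet {I J α : Type} [Fintype I] [Fintype J] [DecidableEq α]
    {A : I → J → Option α} {x : Option α} :
    x ∈ usedSet A ↔ x ≠ none ∧ ∃ i j, A i j = x := by
  simp [usedSet, Finset.mem_erase, Finset.mem_image]

lemma pda_key (n : ℕ) : ∀ (I J α : Type) [Fintype I] [Fintype J] [DecidableEq I]
    [DecidableEq J] [DecidableEq α] (Z : ℕ) (A : I → J → Option α),
    Fintype.card I = Z + n →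
    (∀ (a c : I) (b d : J) (s : α), (a, b) ≠ (c, d) → A a b = some s → A c d = some s →
      A a d = none ∧ A c b = none) →
    (∀ j : J, (Finset.univ.filter (fun i => A i j = none)).card = Z) →
    gPDA n (Fintype.card J) (Z + n) ≤ ((usedSet A).card : ℤ) := by
  induction n with
  | zero => intros; simp only [gPDA]; positivity
  | succ n ih =>
    intro I J α _ _ _ _ _ Z A hcard hC2 hC3
    -- I is nonempty
    have hne : (Finset.univ : Finset I).Nonempty := by
      rw [← Finset.card_pos, Finset.card_univ, hcard]; omega
    set K := Fintype.card J with hK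
    set F := Z + (n+1) with hF
    -- row nonstar count
    set rc : I → ℕ := fun i => (Finset.univ.filter (fun j => A i j ≠ none)).card with hrc
    obtain ⟨i0, -, hmax⟩ := Finset.exists_max_image Finset.univ rc hne
    set m := rc i0 with hm
    -- double counting: total nonstars = K * (n+1)
    have hcol : ∀ j : J, (Finset.univ.filter (fun i => A i j ≠ none)).card = n + 1 := by
      intro j
      have h1 := Finset.card_filter_add_card_filter_not
        (s := (Finset.univ : Finset I)) (p := fun i => A i j = none)
      have h2 := hC3 j
      rw [Finset.card_univ, hcard] at h1
      simp only [ne_eq]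
      omega
    have htot : ∑ i : I, rc i = K * (n+1) := by
      have : ∑ i : I, rc i = ∑ j : J, (Finset.univ.filter (fun i => A i j ≠ none)).card := by
        simp only [hrc, Finset.card_filter]
        exact Finset.sum_comm
      rw [this]
      simp [hcol, hK, Finset.card_univ, mul_comm]
    have hpig : K * (n+1) ≤ F * m := by
      calc K * (n+1) = ∑ i : I, rc i := htot.symm
        _ ≤ ∑ _i : I, m := Finset.sum_le_sum (fun i _ => hmax i (Finset.mem_univ i))
        _ = F * m := by rw [Finset.sum_const, Finset.card_univ, hcard, smul_eq_mul]
    have hFpos : 0 < F := by omega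
    have hceil : ⌈((K : ℚ) * ((n : ℚ) + 1)) / (F : ℚ)⌉ ≤ (m : ℤ) := by
      rw [Int.ceil_le]
      rw [div_le_iff₀ (by exact_mod_cast hFpos)]
      push_cast
      calc (K : ℚ) * ((n : ℚ) + 1) = ((K * (n+1) : ℕ) : ℚ) := by push_cast; ring
        _ ≤ ((F * m : ℕ) : ℚ) := by exact_mod_cast hpig
        _ = (m : ℚ) * (F : ℚ) := by push_cast; ring
    -- subarray
    set Jset : Finset J := Finset.univ.filter (fun j => A i0 j ≠ none) with hJset
    have hJcard : Jset.card = m := rfl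
    let I' := {i : I // ¬ (i = i0)}
    let J' := {j : J // j ∈ Jset}
    let A' : I' → J' → Option α := fun i j => A i.1 j.1
    have hI'card : Fintype.card I' = Z + n := by
      rw [Fintype.card_subtype_compl]
      rw [hcard, Fintype.card_subtype_eq]
      omega
    have hJ'card : Fintype.card J' = m := by
      rw [Fintype.card_coe]
    -- C2 for A'
    have hC2' : ∀ (a c : I') (b d : J') (s : α), (a, b) ≠ (c, d) → A' a b = some s →
        A' c d = some s → A' a d = none ∧ A' c b = none := by
      intro a c b d s hne' h1 h2
      apply hC2 a.1 c.1 b.1 d.1 s _ h1 h2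
      intro h
      apply hne'
      rw [Prod.mk.injEq] at h ⊢
      exact ⟨Subtype.ext h.1, Subtype.ext h.2⟩
    -- C3 for A'
    have hC3' : ∀ j : J', (Finset.univ.filter (fun i => A' i j = none)).card = Z := by
      intro j
      rw [← hC3 j.1]
      apply Finset.card_bij (fun (i : I') _ => i.1)
      · intro a ha
        simp only [Finset.mem_filter, Finset.mem_univ, true_and] at ha ⊢
        exact ha
      · intro a _ b _ h
        exact Subtype.ext h
      · intro b hb
        simp only [Finset.mem_filter, Finset.mem_univ, true_and] at hb
        have hbne : ¬ (b = i0) := by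
          intro h
          have hmemf : A i0 j.1 ≠ none := (Finset.mem_filter.1 j.2).2
          rw [h] at hb
          exact hmemf hb
        refine ⟨⟨b, hbne⟩, ?_, rfl⟩
        simp only [Finset.mem_filter, Finset.mem_univ, true_and]
        exact hb
    have hIH := ih I' J' α Z A' hI'card hC2' hC3'
    rw [hJ'card] at hIH
    -- row symbols
    set R : Finset (Option α) := Jset.attach.image (fun j => A i0 j.1) with hR
    have hRcard : R.card = m := by
      rw [hR]
      rw [Finset.card_image_of_injective _ ?_, Finset.card_attach, hJcard]
      intro b d h
      have h' : A i0 b.1 = A i0 d.1 := h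
      by_contra hbd
      obtain ⟨s, hs⟩ := Option.ne_none_iff_exists'.1 (Finset.mem_filter.1 b.2).2
      have hds : A i0 d.1 = some s := by rw [← h', hs]
      have := hC2 i0 i0 b.1 d.1 s ?_ hs hds
      · exact (Finset.mem_filter.1 d.2).2 this.1
      · intro hc
        rw [Prod.mk.injEq] at hc
        exact hbd (Subtype.ext hc.2)
    -- R ⊆ usedSet A
    have hRsub : R ⊆ usedSet A := by
      intro x hx
      rw [hR, Finset.mem_image] at hx
      obtain ⟨j, -, hj⟩ := hx
      rw [mem_usedSet]
      refine ⟨?_, i0, j.1, hj⟩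
      rw [← hj]
      exact (Finset.mem_filter.1 j.2).2
    -- usedSet A' ⊆ usedSet A
    have hUsub : usedSet A' ⊆ usedSet A := by
      intro x hx
      rw [mem_usedSet] at hx ⊢
      obtain ⟨hxne, i, j, hij⟩ := hx
      exact ⟨hxne, i.1, j.1, hij⟩
    -- disjoint
    have hdisj : Disjoint R (usedSet A') := by
      rw [Finset.disjoint_left]
      intro x hxR hxU
      rw [hR, Finset.mem_image] at hxR
      obtain ⟨b, -, hb⟩ := hxR
      rw [mem_usedSet] at hxU
      obtain ⟨hxne, ⟨cv, hcv⟩, ⟨dv, hdv⟩, hcd⟩ := hxU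
      obtain ⟨s, hs⟩ := Option.ne_none_iff_exists'.1 hxne
      rw [hs] at hb hcd
      have := hC2 i0 cv b.1 dv s ?_ hb hcd
      · exact (Finset.mem_filter.1 hdv).2 this.1
      · intro hc
        rw [Prod.mk.injEq] at hc
        exact hcv hc.1.symm
    have hcount : m + (usedSet A').card ≤ (usedSet A).card := by
      calc m + (usedSet A').card = (R ∪ usedSet A').card := by
            rw [Finset.card_union_of_disjoint hdisj, hRcard]
        _ ≤ (usedSet A).card := Finset.card_le_card (Finset.union_subset hRsub hUsub)
    -- conclude
    show gPDA (n+1) (K : ℤ) F ≤ ((usedSet A).card : ℤ)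
    simp only [gPDA]
    set c : ℤ := ⌈((K : ℚ) * ((n : ℚ) + 1)) / (F : ℚ)⌉ with hc
    have hFsub : F - 1 = Z + n := by omega
    calc c + gPDA n c (F - 1) ≤ (m : ℤ) + gPDA n (m : ℤ) (F-1) :=
          add_le_add hceil (gPDA_mono n (F-1) c (m:ℤ) hceil)
      _ ≤ (m : ℤ) + ((usedSet A').card : ℤ) := by
          rw [hFsub]
          exact add_le_add_right hIH _
      _ ≤ ((usedSet A).card : ℤ) := by exact_mod_cast hcount

lemma sum_eq_gPDA (K F Z : ℕ) (hZ : 0 < Z) (hZF : Z < F) (f : ℕ → ℤ)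
    (hf0 : f 0 = ⌈((K : ℚ) * ((F : ℚ) - (Z : ℚ))) / (F : ℚ)⌉)
    (hfi : ∀ i, 1 ≤ i → i ≤ F - Z - 1 →
      f i = ⌈((f (i - 1) : ℚ) * ((F : ℚ) - (Z : ℚ) - (i : ℚ))) / ((F : ℚ) - (i : ℚ))⌉) :
    ∑ i ∈ Finset.range (F - Z), f i = gPDA (F - Z) (K : ℤ) F := by
  set n := F - Z with hn
  have haux : ∀ m j, 1 ≤ j → j + m = n →
      ∑ i ∈ Finset.Ico j n, f i = gPDA m (f (j-1)) (F - j) := by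
    intro m
    induction m with
    | zero =>
      intro j hj1 hjn
      rw [← hjn]
      simp [gPDA]
    | succ m ihm =>
      intro j hj1 hjn
      have hjlt : j < n := by omega
      rw [Finset.sum_eq_sum_Ico_succ_bot hjlt]
      have hIH := ihm (j+1) (by omega) (by omega)
      rw [hIH]
      have hcj : f j = ⌈((f (j-1) : ℚ) * ((m : ℚ) + 1)) / (((F - j : ℕ)) : ℚ)⌉ := by
        have h1 := hfi j hj1 (by omega)
        rw [h1]
        congr 2
        · have hZjF : Z + j + (m + 1) = F := by omega
          have : (F : ℚ) = (Z : ℚ) + (j : ℚ) + ((m : ℚ) + 1) := by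
            rw [← hZjF]; push_cast; ring
          rw [this]; ring
        · have hjF : j ≤ F := by omega
          rw [Nat.cast_sub hjF]
      have hFj1 : F - j - 1 = F - (j+1) := by omega
      show _ = gPDA (m+1) (f (j-1)) (F - j)
      simp only [gPDA]
      rw [← hcj, hFj1]
      have hjj : j + 1 - 1 = j := by omega
      rw [hjj]
  obtain ⟨p, hp⟩ : ∃ p, n = p + 1 := ⟨n - 1, by omega⟩
  have h0n : 0 < n := by omega
  rw [Finset.range_eq_Ico, Finset.sum_eq_sum_Ico_succ_bot h0n]
  have haux1 := haux (n-1) 1 le_rfl (by omega)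
  rw [haux1]
  rw [hp]
  simp only [gPDA]
  have hc0 : f 0 = ⌈(((K : ℤ) : ℚ) * ((p : ℚ) + 1)) / (F : ℚ)⌉ := by
    rw [hf0]
    congr 1
    have hZpF : Z + (p + 1) = F := by omega
    have h : (F : ℚ) = (Z : ℚ) + ((p : ℚ) + 1) := by rw [← hZpF]; push_cast; ring
    rw [h]
    push_cast
    ring
  rw [← hc0]
  have h1 : p + 1 - 1 = p := by omega
  rw [h1]


theorem pda_lower_bound_sum_ceil (K F Z S : ℕ) (hK : 0 < K) (hZ : 0 < Z) (hS : 0 < S)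
    (hZF : Z < F) (f : ℕ → ℤ)
    (hf0 : f 0 = ⌈((K : ℚ) * ((F : ℚ) - (Z : ℚ))) / (F : ℚ)⌉)
    (hfi : ∀ i, 1 ≤ i → i ≤ F - Z - 1 →
      f i = ⌈((f (i - 1) : ℚ) * ((F : ℚ) - (Z : ℚ) - (i : ℚ))) / ((F : ℚ) - (i : ℚ))⌉)
    (hP : PDAExists K F Z S) :
    (S : ℤ) ≥ ∑ i ∈ Finset.range (F - Z), f i := by
  obtain ⟨P, hPDA⟩ := hP
  obtain ⟨-, -, hC2, hC3⟩ := hPDA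
  have hkey := pda_key (F - Z) (Fin F) (Fin K) (Fin S) Z P
    (by simp; omega) hC2 hC3
  rw [Fintype.card_fin] at hkey
  have hZFZ : Z + (F - Z) = F := by omega
  rw [hZFZ] at hkey
  have hSbound : (usedSet P).card ≤ S := by
    have hsub : usedSet P ⊆ Finset.univ.image (some : Fin S → Option (Fin S)) := by
      intro x hx
      rw [mem_usedSet] at hx
      obtain ⟨hxne, -⟩ := hx
      obtain ⟨s, hs⟩ := Option.ne_none_iff_exists'.1 hxne
      rw [hs]
      exact Finset.mem_image_of_mem _ (Finset.mem_univ s)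
    calc (usedSet P).card ≤ (Finset.univ.image (some : Fin S → Option (Fin S))).card :=
          Finset.card_le_card hsub
      _ = S := by
          rw [Finset.card_image_of_injective _ (Option.some_injective _),
            Finset.card_univ, Fintype.card_fin]
  rw [sum_eq_gPDA K F Z hZ hZF f hf0 hfi]
  calc gPDA (F - Z) (K : ℤ) F ≤ ((usedSet P).card : ℤ) := hkey
    _ ≤ (S : ℤ) := by exact_mod_cast hSbound
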